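/- Specker's lemma on Cayley graphs. Let G be a group and S a finite subset of G generating G (Subgroup.closure S = G). Then for every subset A of G the following are equivalent: (i) the set {(g,s) ∈ G × S : exactly one of g and g·s belongs to A} is finite (i.e. the coboundary of A in the Cayley graph X(G,S) is finite); (ii) for every g ∈ G, the symmetric difference A ∆ Ag is finite, where Ag = {ag : a ∈ A}. In other words, B(X(G,S)) = B(G). -/

import Mathlib

/-- **Specker's lemma on Cayley graphs:** for a finite generating set `S` of `G`,
a subset `A ⊆ G` has finite coboundary in the Cayley graph `X(G,S)` if and only if
`A` is almost right `G`-stable; that is, `B(X(G,S)) = B(G)`. -/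
theorem specker_cayley {G : Type*} [Group G] (S : Finset G)
    (hS : Subgroup.closure (S : Set G) = ⊤) (A : Set G) :
    {p : G × G | p.2 ∈ S ∧ Xor' (p.1 ∈ A) (p.1 * p.2 ∈ A)}.Finite ↔
      ∀ g : G, (symmDiff A ((fun a => a * g) '' A)).Finite := by
  classical
  have hkey : ∀ (B : Set G) (g x : G), x ∈ (fun a => a * g) '' B ↔ x * g⁻¹ ∈ B := by
    intro B g x
    constructor
    · rintro ⟨a, ha, rfl⟩; simpa using ha
    · intro h; exact ⟨x * g⁻¹, h, by group⟩
  set R : G → Set G := fun g => (fun a => a * g) '' A with hR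
  constructor
  · intro hC
    have hs : ∀ s ∈ S, (symmDiff A (R s)).Finite := by
      intro s hsS
      have hsub : symmDiff A (R s) ⊆ (fun p : G × G => p.1 * p.2) ''
          {p : G × G | p.2 ∈ S ∧ Xor' (p.1 ∈ A) (p.1 * p.2 ∈ A)} := by
        intro x hx
        refine ⟨(x * s⁻¹, s), ⟨hsS, ?_⟩, by simp⟩
        simp only [Set.mem_symmDiff, hR, hkey] at hx
        simp only [xor_def, inv_mul_cancel_right]
        tauto
      exact (hC.image _).subset hsub
    have h1 : (symmDiff A (R 1)).Finite := by
      have : R 1 = A := by ext x; simp [hR]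
      rw [this, symmDiff_self]
      exact Set.finite_empty
    have hmul : ∀ a b : G, (symmDiff A (R a)).Finite → (symmDiff A (R b)).Finite →
        (symmDiff A (R (a * b))).Finite := by
      intro a b ha hb
      have hsub : symmDiff A (R (a * b)) ⊆
          symmDiff A (R b) ∪ (fun x => x * b) '' (symmDiff A (R a)) := by
        intro x hx
        simp only [Set.mem_union, Set.mem_symmDiff, hR, hkey] at hx ⊢
        simp only [Set.mem_union, Set.mem_symmDiff, hR, hkey, mul_inv_rev, ← mul_assoc,
          xor_def] at hx ⊢
        tauto
      exact (hb.union (ha.image _)).subset hsub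
    have hinv : ∀ a : G, (symmDiff A (R a)).Finite → (symmDiff A (R a⁻¹)).Finite := by
      intro a ha
      have : symmDiff A (R a⁻¹) = (fun x => x * a⁻¹) '' (symmDiff A (R a)) := by
        ext x
        simp only [Set.mem_symmDiff, hR, hkey, inv_inv, mul_inv_cancel_right, xor_def]
        tauto
      rw [this]
      exact ha.image _
    intro g
    have hg : g ∈ Subgroup.closure (S : Set G) := by rw [hS]; exact Subgroup.mem_top g
    induction hg using Subgroup.closure_induction with
    | mem s hsS => exact hs s hsS
    | one => exact h1
    | mul a b _ _ ha hb => exact hmul a b ha hb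
    | inv a _ ha => exact hinv a ha
  · intro hA
    have hsub : {p : G × G | p.2 ∈ S ∧ Xor' (p.1 ∈ A) (p.1 * p.2 ∈ A)} ⊆
        ⋃ s ∈ (S : Set G), (fun x => (x * s⁻¹, s)) '' (symmDiff A (R s)) := by
      rintro ⟨g, s⟩ ⟨hpS, hx⟩
      refine Set.mem_biUnion hpS ⟨g * s, ?_, by simp⟩
      simp only [Set.mem_symmDiff, hR, hkey, mul_inv_cancel_right, Xor', xor_def] at hx ⊢
      tauto
    exact (Set.Finite.biUnion S.finite_toSet (fun s _ => ((hA s).image _))).subset hsub
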